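/- Let f ∈ G(ℝ⁺), where ℝ⁺ = (0,∞), and suppose f(λx) = f(x) holds in G(ℝ⁺) for every real λ > 0 (i.e. for every λ > 0 the net (f_ε(λx) − f_ε(x))_ε is negligible on ℝ⁺). Then f is a generalized constant: there exists a generalized number c such that f = c in G(ℝ⁺). -/

import Mathlib

open Set Filter Topology MeasureTheory

noncomputable section

variable {E F : Type*} [NormedAddCommGroup E] [NormedSpace ℝ E]
  [NormedAddCommGroup F] [NormedSpace ℝ F]

/-- A net of smooth functions, indexed by `ε ∈ (0,1]`, is *moderate* on the open set `Ω`: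
all iterated derivatives are `O(ε^{-N})` on compact subsets, for some `N`. -/
def IsModerate (Ω : Set E) (u : ℝ → E → F) : Prop :=
  (∀ ε ∈ Set.Ioc (0:ℝ) 1, ContDiffOn ℝ (⊤:ℕ∞) (u ε) Ω) ∧
  ∀ K : Set E, IsCompact K → K ⊆ Ω → ∀ n : ℕ, ∃ N : ℕ, ∃ C : ℝ, ∃ ε₀ : ℝ, 0 < ε₀ ∧
    ∀ ε : ℝ, 0 < ε → ε < ε₀ → ∀ x ∈ K,
      ‖iteratedFDerivWithin ℝ n (u ε) Ω x‖ ≤ C * ε ^ (-(N:ℤ))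

/-- A net of smooth functions is *negligible* on `Ω`: all iterated derivatives are `O(ε^m)`
on compact subsets, for every `m`. -/
def IsNegligible (Ω : Set E) (u : ℝ → E → F) : Prop :=
  (∀ ε ∈ Set.Ioc (0:ℝ) 1, ContDiffOn ℝ (⊤:ℕ∞) (u ε) Ω) ∧
  ∀ K : Set E, IsCompact K → K ⊆ Ω → ∀ n : ℕ, ∀ m : ℕ, ∃ C : ℝ, ∃ ε₀ : ℝ, 0 < ε₀ ∧
    ∀ ε : ℝ, 0 < ε → ε < ε₀ → ∀ x ∈ K,
      ‖iteratedFDerivWithin ℝ n (u ε) Ω x‖ ≤ C * ε ^ m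

/-- A net of numbers is *moderate*: `O(ε^{-N})` for some `N`. -/
def NumModerate (c : ℝ → F) : Prop :=
  ∃ N : ℕ, ∃ C : ℝ, ∃ ε₀ : ℝ, 0 < ε₀ ∧ ∀ ε : ℝ, 0 < ε → ε < ε₀ → ‖c ε‖ ≤ C * ε ^ (-(N:ℤ))

/-- A net of numbers is *negligible*: `O(ε^m)` for every `m`. -/
def NumNegligible (c : ℝ → F) : Prop :=
  ∀ m : ℕ, ∃ C : ℝ, ∃ ε₀ : ℝ, 0 < ε₀ ∧ ∀ ε : ℝ, 0 < ε → ε < ε₀ → ‖c ε‖ ≤ C * ε ^ m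

/-- A net of points is a representative of a *compactly supported generalized point* of `Ω`. -/
def CompactlySupportedPoint (Ω : Set E) (a : ℝ → E) : Prop :=
  ∃ K : Set E, IsCompact K ∧ K ⊆ Ω ∧ ∃ ε₀ : ℝ, 0 < ε₀ ∧ ∀ ε : ℝ, 0 < ε → ε < ε₀ → a ε ∈ K

/-- The partial order on generalized reals, on representatives: `a ≤ b` iff `b - a` has a
representative with all terms nonnegative, i.e. `a ε + n ε ≤ b ε` for some negligible `n`. -/
def TildeLe (a b : ℝ → ℝ) : Prop :=
  ∃ n : ℝ → ℝ, NumNegligible n ∧ ∀ ε ∈ Set.Ioc (0:ℝ) 1, a ε + n ε ≤ b ε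

/-- Strict order `a << b`: `b - a` is strictly positive, i.e. `b ε - a ε > ε^m` for some `m`
and all small `ε`. -/
def TildeLt (a b : ℝ → ℝ) : Prop :=
  ∃ m : ℕ, ∃ ε₀ : ℝ, 0 < ε₀ ∧ ∀ ε : ℝ, 0 < ε → ε < ε₀ → a ε + ε ^ m < b ε

private lemma uIoi : UniqueDiffOn ℝ (Set.Ioi (0:ℝ)) := isOpen_Ioi.uniqueDiffOn

/-- Subtracting a constant does not change higher iterated derivatives. -/
private lemma iter_sub_const (u : ℝ → ℂ) (c : ℂ) (k : ℕ) :
    ∀ x ∈ Set.Ioi (0:ℝ), iteratedDerivWithin (k+1) (fun y => u y - c) (Set.Ioi 0) x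
      = iteratedDerivWithin (k+1) u (Set.Ioi 0) x := by
  induction k with
  | zero =>
    intro x hx
    rw [iteratedDerivWithin_one, iteratedDerivWithin_one,
      derivWithin_sub_const]
  | succ k IH =>
    intro x hx
    rw [iteratedDerivWithin_succ (n := k+1), iteratedDerivWithin_succ (n := k+1)]
    exact derivWithin_congr (fun y hy => IH y hy) (IH x hx)

/-- Order-zero estimate: `f ε - f ε 1` is uniformly small on compacts.  The proof uses a
Baire category argument to get scaling estimates uniform over an interval of scaling
parameters, and then a chaining argument. -/
private lemma key0 (f : ℝ → ℝ → ℂ)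
    (hf : IsModerate (Set.Ioi (0:ℝ)) f)
    (hinv : ∀ lam : ℝ, 0 < lam →
      IsNegligible (Set.Ioi (0:ℝ)) (fun ε x => f ε (lam * x) - f ε x))
    (K : Set ℝ) (hK : IsCompact K) (hKs : K ⊆ Set.Ioi 0) (m : ℕ) :
    ∃ C ε₀ : ℝ, 0 < ε₀ ∧ ε₀ ≤ 1 ∧ ∀ ε : ℝ, 0 < ε → ε < ε₀ → ∀ x ∈ K,
      ‖f ε x - f ε 1‖ ≤ C * ε ^ m := by
  rcases K.eq_empty_or_nonempty with hKe | hne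
  · exact ⟨0, 1, one_pos, le_refl 1, fun ε _ _ x hx => by simp [hKe] at hx⟩
  obtain ⟨r, hrK, hrmin⟩ := hK.exists_isMinOn hne continuousOn_id
  obtain ⟨R, hRK, hRmax⟩ := hK.exists_isMaxOn hne continuousOn_id
  have hr : 0 < r := hKs hrK
  set r' : ℝ := min r 1 with hr'def
  set R' : ℝ := max R 1 with hR'def
  have hr'0 : 0 < r' := lt_min hr one_pos
  have hr'1 : r' ≤ 1 := min_le_right _ _
  have hR'1 : 1 ≤ R' := le_max_right _ _
  set Kh : Set ℝ := Set.Icc (r'/2) R' with hKhdef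
  have hKhs : Kh ⊆ Set.Ioi 0 := fun z hz => lt_of_lt_of_le (by positivity) hz.1
  -- the closed sets for the Baire argument
  set A : ℕ → Set ℝ := fun j =>
    {l | l ∈ Set.Icc (1:ℝ) 2 ∧ ∀ ε : ℝ, 0 < ε → ε < 1/(j+1) → ∀ z ∈ Kh,
      ‖f ε (l * z) - f ε z‖ ≤ (j+1) * ε ^ m} with hAdef
  have hA_closed : ∀ j, IsClosed (A j) := by
    intro j
    have heq : A j = Set.Icc (1:ℝ) 2 ∩
        ⋂ (ε : ℝ) (_ : 0 < ε ∧ ε < 1/(j+1)) (z : ℝ) (_ : z ∈ Kh),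
          (Set.Icc (1:ℝ) 2 ∩ (fun l => ‖f ε (l * z) - f ε z‖) ⁻¹' Set.Iic ((j+1) * ε ^ m)) := by
      rw [hAdef]
      ext l
      simp only [Set.mem_setOf_eq, Set.mem_inter_iff, Set.mem_iInter, Set.mem_preimage,
        Set.mem_Iic]
      constructor
      · rintro ⟨h1, h2⟩
        exact ⟨h1, fun ε hε z hz => ⟨h1, h2 ε hε.1 hε.2 z hz⟩⟩
      · rintro ⟨h1, h2⟩
        exact ⟨h1, fun ε hε1 hε2 z hz => (h2 ε ⟨hε1, hε2⟩ z hz).2⟩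
    rw [heq]
    refine isClosed_Icc.inter (isClosed_iInter fun ε => isClosed_iInter fun hε =>
      isClosed_iInter fun z => isClosed_iInter fun hz => ?_)
    have hε1 : ε ≤ 1 := by
      have h1 : (1:ℝ)/(j+1) ≤ 1 := by
        rw [div_le_one (by positivity)]
        simp
      linarith [hε.2]
    have hfc : ContinuousOn (f ε) (Set.Ioi 0) := (hf.1 ε ⟨hε.1, hε1⟩).continuousOn
    have hz0 : 0 < z := hKhs hz
    have hcont : ContinuousOn (fun l : ℝ => ‖f ε (l * z) - f ε z‖) (Set.Icc (1:ℝ) 2) := by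
      refine ContinuousOn.norm (ContinuousOn.sub ?_ continuousOn_const)
      exact hfc.comp (continuous_mul_right z).continuousOn
        (fun l hl => Set.mem_Ioi.2 (mul_pos (lt_of_lt_of_le one_pos hl.1) hz0))
    exact hcont.preimage_isClosed_of_isClosed isClosed_Icc isClosed_Iic
  have hA_cover : ∀ l ∈ Set.Icc (1:ℝ) 2, ∃ j : ℕ, l ∈ A j := by
    intro l hl
    have hl0 : 0 < l := lt_of_lt_of_le one_pos hl.1
    obtain ⟨C, ε₀, hε₀, hbd⟩ := (hinv l hl0).2 Kh isCompact_Icc hKhs 0 m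
    obtain ⟨j, hj⟩ := exists_nat_ge (max C (1/ε₀))
    refine ⟨j, ?_⟩
    simp only [hAdef, Set.mem_setOf_eq]
    refine ⟨hl, fun ε hε hεj z hz => ?_⟩
    have hεε₀ : ε < ε₀ := by
      have h1 : 1/ε₀ ≤ (j:ℝ) := le_trans (le_max_right _ _) hj
      have h3 : 1/ε₀ ≤ (j:ℝ)+1 := by linarith
      have h2 := one_div_le_one_div_of_le (by positivity) h3
      rw [one_div_one_div] at h2
      linarith
    have hcz : ‖f ε (l * z) - f ε z‖ ≤ C * ε ^ m := by
      simpa [norm_iteratedFDerivWithin_zero] using hbd ε hε hεε₀ z hz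
    refine le_trans hcz (mul_le_mul_of_nonneg_right ?_ (by positivity))
    have := le_trans (le_max_left C (1/ε₀)) hj
    linarith
  -- Baire category in the complete space [1,2]
  haveI : Nonempty (Set.Icc (1:ℝ) 2) := ⟨⟨1, le_refl 1, one_le_two⟩⟩
  haveI := (isClosed_Icc : IsClosed (Set.Icc (1:ℝ) 2)).completeSpace_coe
  obtain ⟨j, hj⟩ := nonempty_interior_of_iUnion_of_closed
    (f := fun j : ℕ => ((fun l : Set.Icc (1:ℝ) 2 => (l : ℝ)) ⁻¹' A j))
    (fun j => (hA_closed j).preimage continuous_subtype_val)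
    (by
      ext l
      simp only [Set.mem_iUnion, Set.mem_univ, iff_true, Set.mem_preimage]
      exact hA_cover (l : ℝ) l.2)
  obtain ⟨⟨l₀, hl₀⟩, hmem⟩ := hj
  rw [mem_interior_iff_mem_nhds, Metric.mem_nhds_iff] at hmem
  obtain ⟨δ, hδ, hball⟩ := hmem
  set a : ℝ := max 1 (l₀ - δ/2) with hadef
  set b : ℝ := min 2 (l₀ + δ/2) with hbdef
  have ha1 : 1 ≤ a := le_max_left _ _
  have hb2 : b ≤ 2 := min_le_left _ _
  have hsubA : Set.Icc a b ⊆ A j := by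
    intro t ht
    have ht12 : t ∈ Set.Icc (1:ℝ) 2 := ⟨le_trans ha1 ht.1, le_trans ht.2 hb2⟩
    have hdist : (⟨t, ht12⟩ : Set.Icc (1:ℝ) 2) ∈ Metric.ball (⟨l₀, hl₀⟩ : Set.Icc (1:ℝ) 2) δ := by
      rw [Metric.mem_ball, Subtype.dist_eq, Real.dist_eq, abs_sub_lt_iff]
      constructor
      · have h1 : t ≤ l₀ + δ/2 := le_trans ht.2 (min_le_right _ _)
        linarith
      · have h1 : l₀ - δ/2 ≤ t := le_trans (le_max_right _ _) ht.1
        linarith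
    exact hball hdist
  have hab : a < b := by
    rcases lt_or_eq_of_le hl₀.2 with h | h
    · have hb' : l₀ < b := lt_min h (by linarith)
      have ha' : a ≤ l₀ := max_le hl₀.1 (by linarith)
      linarith
    · have ha' : a < 2 := max_lt one_lt_two (by rw [h]; linarith)
      have hb' : (2:ℝ) ≤ b := le_min (le_refl 2) (by rw [h]; linarith)
      linarith
  have ha0 : 0 < a := lt_of_lt_of_le one_pos ha1
  set q : ℝ := b / a with hqdef
  have hq1 : 1 < q := (one_lt_div ha0).2 hab
  have hq0 : 0 < q := lt_trans one_pos hq1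
  have hAj : ∀ l ∈ A j, ∀ ε : ℝ, 0 < ε → ε < 1/(j+1) → ∀ z ∈ Kh,
      ‖f ε (l * z) - f ε z‖ ≤ (j+1) * ε ^ m := by
    intro l hl
    simp only [hAdef, Set.mem_setOf_eq] at hl
    exact hl.2
  -- estimates uniform over ratios in [1, q]
  have ratio : ∀ ρ : ℝ, 1 ≤ ρ → ρ ≤ q → ∀ y : ℝ, r' ≤ y → y ≤ R' →
      ∀ ε : ℝ, 0 < ε → ε < 1/(j+1) → ‖f ε (ρ * y) - f ε y‖ ≤ 2 * ((j+1) * ε ^ m) := by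
    intro ρ hρ1 hρq y hy1 hy2 ε hε hεj
    have hy0 : 0 < y := lt_of_lt_of_le hr'0 hy1
    have hla : ρ * a ∈ Set.Icc a b := by
      constructor
      · nlinarith
      · calc ρ * a ≤ (b/a) * a := by nlinarith
          _ = b := div_mul_cancel₀ b (ne_of_gt ha0)
    have haab : a ∈ Set.Icc a b := ⟨le_refl a, hab.le⟩
    have ha2 : a ≤ 2 := le_trans hab.le hb2
    have hz : y / a ∈ Kh := by
      constructor
      · have h1 : y/2 ≤ y/a := div_le_div_of_nonneg_left hy0.le ha0 ha2
        have h2 : r'/2 ≤ y/2 := by linarith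
        linarith
      · exact le_trans (div_le_self hy0.le ha1) hy2
    have h1 := hAj _ (hsubA hla) ε hε hεj (y/a) hz
    have h2 := hAj _ (hsubA haab) ε hε hεj (y/a) hz
    have e1 : ρ * a * (y / a) = ρ * y := by field_simp
    have e2 : a * (y / a) = y := by field_simp
    calc ‖f ε (ρ * y) - f ε y‖
        = ‖(f ε (ρ * a * (y/a)) - f ε (y/a)) - (f ε (a * (y/a)) - f ε (y/a))‖ := by
          rw [e1, e2]; congr 1; ring
      _ ≤ ‖f ε (ρ * a * (y/a)) - f ε (y/a)‖ + ‖f ε (a * (y/a)) - f ε (y/a)‖ := norm_sub_le _ _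
      _ ≤ (j+1) * ε ^ m + (j+1) * ε ^ m := add_le_add h1 h2
      _ = 2 * ((j+1) * ε ^ m) := by ring
  -- chaining upwards from 1
  have up : ∀ k : ℕ, ∀ x : ℝ, 1 ≤ x → x ≤ q ^ k → x ≤ R' →
      ∀ ε : ℝ, 0 < ε → ε < 1/(j+1) → ‖f ε x - f ε 1‖ ≤ k * (2 * ((j+1) * ε ^ m)) := by
    intro k
    induction k with
    | zero =>
      intro x hx1 hxq _ ε hε hεj
      have hx : x = 1 := le_antisymm (by simpa using hxq) hx1
      simp [hx]
    | succ k IH =>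
      intro x hx1 hxq hxR ε hε hεj
      have hy1 : (1:ℝ) ≤ max 1 (x/q) := le_max_left _ _
      have hy0 : (0:ℝ) < max 1 (x/q) := lt_of_lt_of_le one_pos hy1
      have hyx : max 1 (x/q) ≤ x := max_le hx1 (div_le_self (by linarith) hq1.le)
      have hyq : max 1 (x/q) ≤ q ^ k := by
        refine max_le (one_le_pow₀ hq1.le) ((div_le_iff₀ hq0).2 ?_)
        calc x ≤ q ^ (k+1) := hxq
          _ = q ^ k * q := pow_succ q k
      have hρ1 : 1 ≤ x / max 1 (x/q) := (one_le_div hy0).2 hyx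
      have hρq : x / max 1 (x/q) ≤ q := by
        rw [div_le_iff₀ hy0]
        have h1 : x/q ≤ max 1 (x/q) := le_max_right _ _
        calc x = q * (x/q) := by field_simp
          _ ≤ q * max 1 (x/q) := mul_le_mul_of_nonneg_left h1 hq0.le
      have hmain := ratio (x / max 1 (x/q)) hρ1 hρq (max 1 (x/q)) (le_trans hr'1 hy1)
        (le_trans hyx hxR) ε hε hεj
      rw [div_mul_cancel₀ x (ne_of_gt hy0)] at hmain
      have hIH := IH (max 1 (x/q)) hy1 hyq (le_trans hyx hxR) ε hε hεj
      calc ‖f ε x - f ε 1‖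
          ≤ ‖f ε x - f ε (max 1 (x/q))‖ + ‖f ε (max 1 (x/q)) - f ε 1‖ := by
            have e : f ε x - f ε 1
                = (f ε x - f ε (max 1 (x/q))) + (f ε (max 1 (x/q)) - f ε 1) := by ring
            rw [e]; exact norm_add_le _ _
        _ ≤ 2 * ((j+1) * ε ^ m) + k * (2 * ((j+1) * ε ^ m)) := add_le_add hmain hIH
        _ = (k+1 : ℕ) * (2 * ((j+1) * ε ^ m)) := by push_cast; ring
  -- chaining downwards towards 1
  have down : ∀ k : ℕ, ∀ x : ℝ, r' ≤ x → x ≤ 1 → 1 ≤ x * q ^ k →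
      ∀ ε : ℝ, 0 < ε → ε < 1/(j+1) → ‖f ε x - f ε 1‖ ≤ k * (2 * ((j+1) * ε ^ m)) := by
    intro k
    induction k with
    | zero =>
      intro x _ hx1 hxq ε hε hεj
      have hx : x = 1 := le_antisymm hx1 (by simpa using hxq)
      simp [hx]
    | succ k IH =>
      intro x hxr hx1 hxq ε hε hεj
      have hx0 : 0 < x := lt_of_lt_of_le hr'0 hxr
      have hxy : x ≤ min 1 (x*q) := le_min hx1 (le_mul_of_one_le_right hx0.le hq1.le)
      have hy1 : min 1 (x*q) ≤ 1 := min_le_left _ _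
      have hρ1 : 1 ≤ min 1 (x*q) / x := (one_le_div hx0).2 hxy
      have hρq : min 1 (x*q) / x ≤ q := by
        rw [div_le_iff₀ hx0]
        calc min 1 (x*q) ≤ x * q := min_le_right _ _
          _ = q * x := mul_comm _ _
      have hmain := ratio (min 1 (x*q) / x) hρ1 hρq x hxr (le_trans hx1 hR'1) ε hε hεj
      rw [div_mul_cancel₀ (min 1 (x*q)) (ne_of_gt hx0)] at hmain
      have hyq : 1 ≤ min 1 (x*q) * q ^ k := by
        rcases le_total 1 (x*q) with hcase | hcase
        · rw [min_eq_left hcase]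
          simpa using one_le_pow₀ hq1.le (n := k)
        · rw [min_eq_right hcase]
          calc (1:ℝ) ≤ x * q ^ (k+1) := hxq
            _ = x * q * q ^ k := by rw [pow_succ]; ring
      have hIH := IH (min 1 (x*q)) (le_trans hxr hxy) hy1 hyq ε hε hεj
      calc ‖f ε x - f ε 1‖
          ≤ ‖f ε (min 1 (x*q)) - f ε x‖ + ‖f ε (min 1 (x*q)) - f ε 1‖ := by
            have e : f ε x - f ε 1
                = (f ε (min 1 (x*q)) - f ε 1) - (f ε (min 1 (x*q)) - f ε x) := by ring
            rw [e]
            exact (norm_sub_le _ _).trans_eq (add_comm _ _)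
        _ ≤ 2 * ((j+1) * ε ^ m) + k * (2 * ((j+1) * ε ^ m)) := add_le_add hmain hIH
        _ = (k+1 : ℕ) * (2 * ((j+1) * ε ^ m)) := by push_cast; ring
  -- conclude
  obtain ⟨k1, hk1⟩ := pow_unbounded_of_one_lt R' hq1
  obtain ⟨k2, hk2⟩ := pow_unbounded_of_one_lt (1/r') hq1
  refine ⟨(max k1 k2) * (2 * (j+1)), 1/(j+1), by positivity, ?_, ?_⟩
  · rw [div_le_one (by positivity)]
    simp
  intro ε hε hε' x hx
  have hxr : r ≤ x := hrmin hx
  have hxR : x ≤ R := hRmax hx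
  have hbig : q ^ k1 ≤ q ^ (max k1 k2) := pow_le_pow_right₀ hq1.le (le_max_left _ _)
  have hbig2 : q ^ k2 ≤ q ^ (max k1 k2) := pow_le_pow_right₀ hq1.le (le_max_right _ _)
  have hxR' : x ≤ R' := le_trans hxR (le_max_left _ _)
  have hfinal : ‖f ε x - f ε 1‖ ≤ (max k1 k2) * (2 * ((j+1) * ε ^ m)) := by
    rcases le_total 1 x with hcase | hcase
    · exact up (max k1 k2) x hcase (by linarith) hxR' ε hε hε'
    · refine down (max k1 k2) x (le_trans (min_le_left r 1) hxr) hcase ?_ ε hε hε'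
      have h1 : 1/r' ≤ q ^ (max k1 k2) := le_trans hk2.le hbig2
      have h2 : r' ≤ x := le_trans (min_le_left r 1) hxr
      calc (1:ℝ) = r' * (1/r') := by field_simp
        _ ≤ x * q ^ (max k1 k2) :=
            mul_le_mul h2 h1 (by positivity) (by linarith)
  calc ‖f ε x - f ε 1‖ ≤ (max k1 k2) * (2 * ((j+1) * ε ^ m)) := hfinal
    _ = ((max k1 k2) * (2 * (j+1))) * ε ^ m := by push_cast; ring

/-- All-orders estimate: each iterated derivative of `f ε` (corrected by `f ε 1` at
order zero) is uniformly small on compacts.  Induction on the order, using a Taylor/mean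
value argument together with moderateness at two orders higher. -/
private lemma keyn (f : ℝ → ℝ → ℂ)
    (hf : IsModerate (Set.Ioi (0:ℝ)) f)
    (hinv : ∀ lam : ℝ, 0 < lam →
      IsNegligible (Set.Ioi (0:ℝ)) (fun ε x => f ε (lam * x) - f ε x)) :
    ∀ n : ℕ, ∀ K : Set ℝ, IsCompact K → K ⊆ Set.Ioi 0 → ∀ m : ℕ,
      ∃ C ε₀ : ℝ, 0 < ε₀ ∧ ε₀ ≤ 1 ∧ ∀ ε : ℝ, 0 < ε → ε < ε₀ → ∀ x ∈ K,
        ‖iteratedDerivWithin n (f ε) (Set.Ioi 0) x - (if n = 0 then f ε 1 else 0)‖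
          ≤ C * ε ^ m := by
  intro n
  induction n with
  | zero =>
    intro K hK hKs m
    obtain ⟨C, ε₀, h1, h2, hb⟩ := key0 f hf hinv K hK hKs m
    exact ⟨C, ε₀, h1, h2, fun ε hε hε' x hx => by
      simpa [iteratedDerivWithin_zero] using hb ε hε hε' x hx⟩
  | succ n IH =>
    intro K hK hKs m
    rcases K.eq_empty_or_nonempty with hKe | hne
    · exact ⟨0, 1, one_pos, le_refl 1, fun ε _ _ x hx => by simp [hKe] at hx⟩
    obtain ⟨r, hrK, hrmin⟩ := hK.exists_isMinOn hne continuousOn_id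
    obtain ⟨R, hRK, hRmax⟩ := hK.exists_isMaxOn hne continuousOn_id
    have hr : 0 < r := hKs hrK
    have hRr : r ≤ R := hrmin hRK
    have hK' : Set.Icc r (R+1) ⊆ Set.Ioi (0:ℝ) := fun t ht => lt_of_lt_of_le hr ht.1
    obtain ⟨N, C₂, ε₂, hε₂, hbd2⟩ := hf.2 (Set.Icc r (R+1)) isCompact_Icc hK' (n+2)
    obtain ⟨C₁, ε₁, hε₁, hε₁1, hbd1⟩ := IH (Set.Icc r (R+1)) isCompact_Icc hK' (2*m + N + 2)
    set C₁' : ℝ := max C₁ 0 with hC₁'def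
    set C₂' : ℝ := max C₂ 0 with hC₂'def
    have hC₁'0 : 0 ≤ C₁' := le_max_right _ _
    have hC₂'0 : 0 ≤ C₂' := le_max_right _ _
    refine ⟨2*C₁' + C₂', min ε₁ (min ε₂ 1), lt_min hε₁ (lt_min hε₂ one_pos),
      (min_le_right _ _).trans (min_le_right _ _), ?_⟩
    intro ε hε hε' x hx
    have hεε₁ : ε < ε₁ := lt_of_lt_of_le hε' (min_le_left _ _)
    have hεε₂ : ε < ε₂ := lt_of_lt_of_le hε' ((min_le_right _ _).trans (min_le_left _ _))
    have hε1 : ε < 1 := lt_of_lt_of_le hε' ((min_le_right _ _).trans (min_le_right _ _))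
    have hsm : ContDiffOn ℝ (⊤:ℕ∞) (f ε) (Set.Ioi 0) := hf.1 ε ⟨hε, hε1.le⟩
    have hrx : r ≤ x := hrmin hx
    have hxR : x ≤ R := hRmax hx
    set h : ℝ := ε ^ (m + N + 1) with hhdef
    have hh0 : 0 < h := pow_pos hε _
    have hh1 : h ≤ 1 := pow_le_one₀ hε.le hε1.le
    have hseg : Set.Icc x (x+h) ⊆ Set.Icc r (R+1) := Set.Icc_subset_Icc hrx (by linarith)
    have hsegIoi : Set.Icc x (x+h) ⊆ Set.Ioi (0:ℝ) := fun t ht => hK' (hseg ht)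
    -- derivative facts
    have hdiff : ∀ k : ℕ, ∀ t ∈ Set.Ioi (0:ℝ),
        HasDerivWithinAt (iteratedDerivWithin k (f ε) (Set.Ioi 0))
          (iteratedDerivWithin (k+1) (f ε) (Set.Ioi 0) t) (Set.Ioi 0) t := by
      intro k t ht
      have hd : DifferentiableOn ℝ (iteratedDerivWithin k (f ε) (Set.Ioi 0)) (Set.Ioi 0) :=
        hsm.differentiableOn_iteratedDerivWithin (by exact_mod_cast WithTop.coe_lt_top k) uIoi
      have hdt := (hd t ht).hasDerivWithinAt
      rwa [← iteratedDerivWithin_succ] at hdt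
    set M : ℝ := C₂' * ε ^ (-(N:ℤ)) with hMdef
    have hM0 : 0 ≤ M := mul_nonneg hC₂'0 (zpow_nonneg hε.le _)
    have hbound2 : ∀ t ∈ Set.Icc x (x+h),
        ‖iteratedDerivWithin (n+2) (f ε) (Set.Ioi 0) t‖ ≤ M := by
      intro t ht
      have hb := hbd2 ε hε hεε₂ t (hseg ht)
      rw [norm_iteratedFDerivWithin_eq_norm_iteratedDerivWithin] at hb
      exact le_trans hb (mul_le_mul_of_nonneg_right (le_max_left _ _) (zpow_nonneg hε.le _))
    have hxmem : x ∈ Set.Icc x (x+h) := Set.left_mem_Icc.2 (by linarith)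
    have hxhmem : x + h ∈ Set.Icc x (x+h) := Set.right_mem_Icc.2 (by linarith)
    have lip : ∀ t ∈ Set.Icc x (x+h),
        ‖iteratedDerivWithin (n+1) (f ε) (Set.Ioi 0) t
          - iteratedDerivWithin (n+1) (f ε) (Set.Ioi 0) x‖ ≤ M * h := by
      intro t ht
      have hm := Convex.norm_image_sub_le_of_norm_hasDerivWithin_le
        (f := iteratedDerivWithin (n+1) (f ε) (Set.Ioi 0))
        (f' := iteratedDerivWithin (n+2) (f ε) (Set.Ioi 0))
        (fun s hs => (hdiff (n+1) s (hsegIoi hs)).mono hsegIoi)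
        hbound2 (convex_Icc _ _) hxmem ht
      refine le_trans hm ?_
      have htx : ‖t - x‖ ≤ h := by
        rw [Real.norm_eq_abs, abs_of_nonneg (by linarith [ht.1])]
        linarith [ht.2]
      exact mul_le_mul_of_nonneg_left htx hM0
    -- first mean value estimate
    have hg : ∀ t ∈ Set.Icc x (x+h),
        HasDerivWithinAt
          (fun s => iteratedDerivWithin n (f ε) (Set.Ioi 0) s
            - s • iteratedDerivWithin (n+1) (f ε) (Set.Ioi 0) x)
          (iteratedDerivWithin (n+1) (f ε) (Set.Ioi 0) t
            - iteratedDerivWithin (n+1) (f ε) (Set.Ioi 0) x) (Set.Icc x (x+h)) t := by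
      intro t ht
      have h1 := (hdiff n t (hsegIoi ht)).mono hsegIoi
      have h2 : HasDerivWithinAt
          (fun s : ℝ => s • iteratedDerivWithin (n+1) (f ε) (Set.Ioi 0) x)
          (iteratedDerivWithin (n+1) (f ε) (Set.Ioi 0) x) (Set.Icc x (x+h)) t := by
        simpa using (hasDerivWithinAt_id t (Set.Icc x (x+h))).smul_const
          (iteratedDerivWithin (n+1) (f ε) (Set.Ioi 0) x)
      exact h1.sub h2
    have hmvt := Convex.norm_image_sub_le_of_norm_hasDerivWithin_le
      (f := fun s => iteratedDerivWithin n (f ε) (Set.Ioi 0) s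
        - s • iteratedDerivWithin (n+1) (f ε) (Set.Ioi 0) x)
      (f' := fun t => iteratedDerivWithin (n+1) (f ε) (Set.Ioi 0) t
        - iteratedDerivWithin (n+1) (f ε) (Set.Ioi 0) x)
      hg lip (convex_Icc _ _) hxmem hxhmem
    have hnorm1 : ‖x + h - x‖ = h := by
      rw [add_sub_cancel_left, Real.norm_eq_abs, abs_of_pos hh0]
    have e : (iteratedDerivWithin n (f ε) (Set.Ioi 0) (x+h)
          - (x+h) • iteratedDerivWithin (n+1) (f ε) (Set.Ioi 0) x)
        - (iteratedDerivWithin n (f ε) (Set.Ioi 0) x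
          - x • iteratedDerivWithin (n+1) (f ε) (Set.Ioi 0) x)
        = (iteratedDerivWithin n (f ε) (Set.Ioi 0) (x+h)
            - iteratedDerivWithin n (f ε) (Set.Ioi 0) x)
          - h • iteratedDerivWithin (n+1) (f ε) (Set.Ioi 0) x := by
      rw [add_smul]; abel
    have h3 : ‖(iteratedDerivWithin n (f ε) (Set.Ioi 0) (x+h)
          - iteratedDerivWithin n (f ε) (Set.Ioi 0) x)
        - h • iteratedDerivWithin (n+1) (f ε) (Set.Ioi 0) x‖ ≤ M * h * h := by
      rw [← e]
      calc _ ≤ M * h * ‖x + h - x‖ := hmvt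
        _ = M * h * h := by rw [hnorm1]
    have key : ‖h • iteratedDerivWithin (n+1) (f ε) (Set.Ioi 0) x‖
        ≤ ‖iteratedDerivWithin n (f ε) (Set.Ioi 0) (x+h)
            - iteratedDerivWithin n (f ε) (Set.Ioi 0) x‖ + M * h * h := by
      calc ‖h • iteratedDerivWithin (n+1) (f ε) (Set.Ioi 0) x‖
          = ‖(iteratedDerivWithin n (f ε) (Set.Ioi 0) (x+h)
              - iteratedDerivWithin n (f ε) (Set.Ioi 0) x)
            - ((iteratedDerivWithin n (f ε) (Set.Ioi 0) (x+h)
              - iteratedDerivWithin n (f ε) (Set.Ioi 0) x)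
              - h • iteratedDerivWithin (n+1) (f ε) (Set.Ioi 0) x)‖ := by
            congr 1; abel
        _ ≤ ‖iteratedDerivWithin n (f ε) (Set.Ioi 0) (x+h)
              - iteratedDerivWithin n (f ε) (Set.Ioi 0) x‖
            + ‖(iteratedDerivWithin n (f ε) (Set.Ioi 0) (x+h)
              - iteratedDerivWithin n (f ε) (Set.Ioi 0) x)
              - h • iteratedDerivWithin (n+1) (f ε) (Set.Ioi 0) x‖ := norm_sub_le _ _
        _ ≤ _ + M * h * h := by linarith
    have hDn : ‖iteratedDerivWithin n (f ε) (Set.Ioi 0) (x+h)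
        - iteratedDerivWithin n (f ε) (Set.Ioi 0) x‖ ≤ 2 * C₁' * ε ^ (2*m + N + 2) := by
      have hxK' : x ∈ Set.Icc r (R+1) := ⟨hrx, by linarith⟩
      have hxhK' : x + h ∈ Set.Icc r (R+1) := ⟨by linarith, by linarith⟩
      have b1 := hbd1 ε hε hεε₁ (x+h) hxhK'
      have b2 := hbd1 ε hε hεε₁ x hxK'
      have hC : C₁ * ε ^ (2*m+N+2) ≤ C₁' * ε ^ (2*m+N+2) :=
        mul_le_mul_of_nonneg_right (le_max_left _ _) (by positivity)
      calc ‖iteratedDerivWithin n (f ε) (Set.Ioi 0) (x+h)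
            - iteratedDerivWithin n (f ε) (Set.Ioi 0) x‖
          = ‖(iteratedDerivWithin n (f ε) (Set.Ioi 0) (x+h) - (if n = 0 then f ε 1 else 0))
            - (iteratedDerivWithin n (f ε) (Set.Ioi 0) x - (if n = 0 then f ε 1 else 0))‖ := by
            congr 1; abel
        _ ≤ ‖iteratedDerivWithin n (f ε) (Set.Ioi 0) (x+h) - (if n = 0 then f ε 1 else 0)‖
            + ‖iteratedDerivWithin n (f ε) (Set.Ioi 0) x - (if n = 0 then f ε 1 else 0)‖ :=
            norm_sub_le _ _
        _ ≤ C₁ * ε ^ (2*m+N+2) + C₁ * ε ^ (2*m+N+2) := add_le_add b1 b2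
        _ ≤ 2 * C₁' * ε ^ (2*m+N+2) := by linarith
    -- arithmetic
    have e1 : ε ^ (2*m + N + 2) = ε ^ (m+1) * h := by
      rw [hhdef, ← pow_add]
      congr 1
      ring
    have e2 : M * h * h = C₂' * ε ^ (m+1) * h := by
      rw [hMdef, hhdef]
      have ez : ε ^ (-(N:ℤ)) * ε ^ (m + N + 1) = ε ^ (m+1) := by
        rw [show m + N + 1 = N + (m+1) by ring, pow_add, ← mul_assoc, ← zpow_natCast ε N,
          ← zpow_add₀ (ne_of_gt hε)]
        norm_num
      calc C₂' * ε ^ (-(N:ℤ)) * ε ^ (m+N+1) * ε ^ (m+N+1)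
          = C₂' * (ε ^ (-(N:ℤ)) * ε ^ (m+N+1)) * ε ^ (m+N+1) := by ring
        _ = C₂' * ε ^ (m+1) * ε ^ (m+N+1) := by rw [ez]
    have hεm : ε ^ (m+1) ≤ ε ^ m := pow_le_pow_of_le_one hε.le hε1.le (Nat.le_succ m)
    have hnv : ‖h • iteratedDerivWithin (n+1) (f ε) (Set.Ioi 0) x‖
        = h * ‖iteratedDerivWithin (n+1) (f ε) (Set.Ioi 0) x‖ := by
      rw [norm_smul, Real.norm_eq_abs, abs_of_pos hh0]
    have t1 : ‖iteratedDerivWithin n (f ε) (Set.Ioi 0) (x+h)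
        - iteratedDerivWithin n (f ε) (Set.Ioi 0) x‖ ≤ 2 * C₁' * ε ^ (m+1) * h := by
      calc _ ≤ 2 * C₁' * ε ^ (2*m+N+2) := hDn
        _ = 2 * C₁' * ε ^ (m+1) * h := by rw [e1]; ring
    have t3 : h * ‖iteratedDerivWithin (n+1) (f ε) (Set.Ioi 0) x‖
        ≤ ((2*C₁' + C₂') * ε ^ m) * h := by
      have step1 : h * ‖iteratedDerivWithin (n+1) (f ε) (Set.Ioi 0) x‖
          ≤ (2*C₁' + C₂') * ε ^ (m+1) * h := by
        calc h * ‖iteratedDerivWithin (n+1) (f ε) (Set.Ioi 0) x‖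
            = ‖h • iteratedDerivWithin (n+1) (f ε) (Set.Ioi 0) x‖ := hnv.symm
          _ ≤ ‖iteratedDerivWithin n (f ε) (Set.Ioi 0) (x+h)
                - iteratedDerivWithin n (f ε) (Set.Ioi 0) x‖ + M * h * h := key
          _ ≤ 2 * C₁' * ε ^ (m+1) * h + C₂' * ε ^ (m+1) * h := by
              rw [← e2]; exact add_le_add t1 (le_refl _)
          _ = (2*C₁' + C₂') * ε ^ (m+1) * h := by ring
      refine le_trans step1 ?_
      have hc0 : 0 ≤ 2*C₁' + C₂' := by linarith
      have : (2*C₁' + C₂') * ε ^ (m+1) ≤ (2*C₁' + C₂') * ε ^ m :=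
        mul_le_mul_of_nonneg_left hεm hc0
      exact mul_le_mul_of_nonneg_right this hh0.le
    have hv : ‖iteratedDerivWithin (n+1) (f ε) (Set.Ioi 0) x‖ ≤ (2*C₁' + C₂') * ε ^ m := by
      rw [mul_comm h _] at t3
      exact le_of_mul_le_mul_right t3 hh0
    rw [if_neg (Nat.succ_ne_zero n), sub_zero]
    exact hv

/-- a generalized function on ℝ⁺ = (0,∞) invariant under all standard
scalings is a generalized constant. -/
theorem statement_3
    (f : ℝ → ℝ → ℂ)
    (hf : IsModerate (Set.Ioi (0:ℝ)) f)
    (hinv : ∀ lam : ℝ, 0 < lam →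
      IsNegligible (Set.Ioi (0:ℝ)) (fun ε x => f ε (lam * x) - f ε x)) :
    ∃ c : ℝ → ℂ, NumModerate c ∧
      IsNegligible (Set.Ioi (0:ℝ)) (fun ε x => f ε x - c ε) := by
  refine ⟨fun ε => f ε 1, ?_, ?_, ?_⟩
  · -- moderateness of the constant
    obtain ⟨N, C, ε₀, hε₀, hb⟩ := hf.2 {1} isCompact_singleton
      (Set.singleton_subset_iff.2 (by norm_num)) 0
    refine ⟨N, C, ε₀, hε₀, fun ε hε hε' => ?_⟩
    simpa [norm_iteratedFDerivWithin_zero] using hb ε hε hε' 1 rfl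
  · -- smoothness
    intro ε hε
    exact (hf.1 ε hε).sub contDiffOn_const
  · -- negligibility of f - c
    intro K hK hKs n m
    obtain ⟨C, ε₀, h1, _, hb⟩ := keyn f hf hinv n K hK hKs m
    refine ⟨C, ε₀, h1, fun ε hε hε' x hx => ?_⟩
    have hx0 : x ∈ Set.Ioi (0:ℝ) := hKs hx
    have hb' := hb ε hε hε' x hx
    rw [norm_iteratedFDerivWithin_eq_norm_iteratedDerivWithin]
    show ‖iteratedDerivWithin n (fun y => f ε y - f ε 1) (Set.Ioi 0) x‖ ≤ C * ε ^ m
    cases n with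
    | zero => simpa [iteratedDerivWithin_zero] using hb'
    | succ k =>
      rw [iter_sub_const (f ε) (f ε 1) k x hx0]
      simpa [Nat.succ_ne_zero] using hb'
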